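/- Let $a_0, a_1, a_2$ be pairwise coprime positive integers. Then $\sigma_0(a_1,a_2;a_0) + \sigma_0(a_0,a_2;a_1) + \sigma_0(a_0,a_1;a_2) = 1 - \frac{1}{12}\left(\frac{3}{a_0}+\frac{3}{a_1}+\frac{3}{a_2}+\frac{a_0}{a_1a_2}+\frac{a_1}{a_0a_2}+\frac{a_2}{a_0a_1}\right)$ (Zagier reciprocity in dimension 2, in Fourier-Dedekind form). -/

import Mathlib

open Finset Polynomial

/-- The Fourier-Dedekind sum `σ₀(a,b;c)`. -/
noncomputable def fourierDedekind2zero (a b c : ℕ) : ℂ :=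
  (1 / (c : ℂ)) * ∑ z ∈ (nthRootsFinset c (1 : ℂ)).erase 1,
    1 / ((1 - z ^ a) * (1 - z ^ b))

namespace ZagierAux

lemma eq_one_of_pows {z : ℂ} {m n : ℕ} (h : Nat.Coprime m n)
    (hm : z ^ m = 1) (hn : z ^ n = 1) : z = 1 := by
  have h3 : orderOf z ∣ Nat.gcd m n :=
    Nat.dvd_gcd (orderOf_dvd_of_pow_eq_one hm) (orderOf_dvd_of_pow_eq_one hn)
  rw [h] at h3
  exact orderOf_eq_one_iff.mp (Nat.dvd_one.mp h3)

lemma sigma_eq_prod (a : ℕ) (ha : 0 < a) :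
    (∑ i ∈ range a, (X : ℂ[X]) ^ i) = ∏ ζ ∈ (nthRootsFinset a (1 : ℂ)).erase 1, (X - C ζ) := by
  have hprim := Complex.isPrimitiveRoot_exp a ha.ne'
  have hfull : (X : ℂ[X]) ^ a - 1 = ∏ ζ ∈ nthRootsFinset a (1 : ℂ), (X - C ζ) :=
    X_pow_sub_one_eq_prod ha hprim
  have h1 : (1 : ℂ) ∈ nthRootsFinset a (1 : ℂ) := one_mem_nthRootsFinset ha
  have hsplit : ∏ ζ ∈ nthRootsFinset a (1 : ℂ), (X - C ζ)
      = (X - C 1) * ∏ ζ ∈ (nthRootsFinset a (1 : ℂ)).erase 1, (X - C ζ) :=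
    (Finset.mul_prod_erase _ _ h1).symm
  have hgs : (∑ i ∈ range a, (X : ℂ[X]) ^ i) * (X - 1) = X ^ a - 1 := geom_sum_mul X a
  apply mul_left_cancel₀ (X_sub_C_ne_zero (1 : ℂ))
  rw [← hsplit, ← hfull, ← hgs]
  simp [C_1]
  ring

lemma geom_sum_zero_eval (n : ℕ) (hn : 0 < n) : (∑ i ∈ range n, (0 : ℂ) ^ i) = 1 := by
  obtain ⟨m, rfl⟩ := Nat.exists_eq_add_of_lt hn
  rw [Finset.sum_range_succ']
  simp

lemma v3 (n : ℕ) (hn : 0 < n) (z : ℂ) :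
    (z - 1) * ∏ μ ∈ (nthRootsFinset n (1 : ℂ)).erase 1, (z - μ) = z ^ n - 1 := by
  have h := congrArg (eval z) (sigma_eq_prod n hn)
  simp only [eval_finset_sum, eval_pow, eval_X, eval_prod, eval_sub, eval_C] at h
  have hg : (∑ i ∈ range n, z ^ i) * (z - 1) = z ^ n - 1 := geom_sum_mul z n
  rw [h] at hg
  rw [← hg]; ring

lemma v4 (n : ℕ) (hn : 0 < n) : ∏ μ ∈ (nthRootsFinset n (1 : ℂ)).erase 1, (0 - μ) = 1 := by
  have h := congrArg (eval 0) (sigma_eq_prod n hn)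
  simp only [eval_finset_sum, eval_pow, eval_X, eval_prod, eval_sub, eval_C] at h
  rw [← h, geom_sum_zero_eval n hn]

lemma v1 (a : ℕ) (ha : 0 < a) {z : ℂ} (hz : z ∈ (nthRootsFinset a (1 : ℂ)).erase 1) :
    (z - 1) * ∏ μ ∈ ((nthRootsFinset a (1 : ℂ)).erase 1).erase z, (z - μ)
      = a * z ^ (a - 1) := by
  obtain ⟨hz1, hzmem⟩ := Finset.mem_erase.mp hz
  have hza : z ^ a = 1 := (mem_nthRootsFinset ha 1).mp hzmem
  have hprim := Complex.isPrimitiveRoot_exp a ha.ne'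
  have hfull : (X : ℂ[X]) ^ a - 1 = ∏ ζ ∈ nthRootsFinset a (1 : ℂ), (X - C ζ) :=
    X_pow_sub_one_eq_prod ha hprim
  have hgeom : (∑ i ∈ range a, (X : ℂ[X]) ^ i * C z ^ (a - 1 - i)) * (X - C z)
      = (X : ℂ[X]) ^ a - 1 := by
    have h := geom_sum₂_mul (X : ℂ[X]) (C z) a
    rwa [← C_pow, hza, C_1] at h
  have hcancel : ∏ ζ ∈ (nthRootsFinset a (1 : ℂ)).erase z, (X - C ζ)
      = ∑ i ∈ range a, (X : ℂ[X]) ^ i * C z ^ (a - 1 - i) := by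
    apply mul_left_cancel₀ (X_sub_C_ne_zero z)
    rw [Finset.mul_prod_erase _ (fun ζ => X - C ζ) hzmem, ← hfull, ← hgeom]
    ring
  -- evaluate at z
  have hev := congrArg (eval z) hcancel
  simp only [eval_prod, eval_finset_sum, eval_mul, eval_pow, eval_X, eval_sub, eval_C] at hev
  have hsum : (∑ i ∈ range a, z ^ i * z ^ (a - 1 - i)) = a * z ^ (a - 1) := by
    rw [Finset.sum_congr rfl (fun i hi => ?_), Finset.sum_const, card_range, nsmul_eq_mul]
    rw [← pow_add]
    congr 1
    have := Finset.mem_range.mp hi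
    omega
  rw [hsum] at hev
  -- now split off the 1 from the erased-z set
  have h1mem : (1 : ℂ) ∈ (nthRootsFinset a (1 : ℂ)).erase z :=
    Finset.mem_erase.mpr ⟨Ne.symm hz1, one_mem_nthRootsFinset ha⟩
  rw [← Finset.mul_prod_erase _ _ h1mem, Finset.erase_right_comm] at hev
  rw [← hev]

lemma v2 (a : ℕ) (ha : 0 < a) {z : ℂ} (hz : z ∈ (nthRootsFinset a (1 : ℂ)).erase 1) :
    z * ∏ μ ∈ ((nthRootsFinset a (1 : ℂ)).erase 1).erase z, (0 - μ) = -1 := by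
  have h := congrArg (eval 0) (sigma_eq_prod a ha)
  rw [← Finset.mul_prod_erase _ _ hz] at h
  simp only [eval_finset_sum, eval_pow, eval_X, eval_prod, eval_mul, eval_sub, eval_C] at h
  rw [geom_sum_zero_eval a ha] at h
  rw [show z * ∏ μ ∈ ((nthRootsFinset a (1 : ℂ)).erase 1).erase z, (0 - μ)
    = -((0 - z) * ∏ μ ∈ ((nthRootsFinset a (1 : ℂ)).erase 1).erase z, (0 - μ)) by ring, ← h]

noncomputable abbrev E (n : ℕ) : Finset ℂ := (nthRootsFinset n (1 : ℂ)).erase 1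

lemma not_mem_E {m n : ℕ} (h : Nat.Coprime m n) (hm : 0 < m) (hn : 0 < n)
    {z : ℂ} (hz : z ∈ E m) : z ∉ E n := by
  intro hzn
  obtain ⟨h1, h2⟩ := Finset.mem_erase.mp hz
  obtain ⟨_, h4⟩ := Finset.mem_erase.mp hzn
  exact h1 (eq_one_of_pows h ((mem_nthRootsFinset hm 1).mp h2) ((mem_nthRootsFinset hn 1).mp h4))

lemma disjoint_E {m n : ℕ} (h : Nat.Coprime m n) (hm : 0 < m) (hn : 0 < n) :
    Disjoint (E m) (E n) := by
  rw [Finset.disjoint_left]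
  exact fun z hz1 hz2 => not_mem_E h hm hn hz1 hz2

lemma sigma_eq_prodE (a : ℕ) (ha : 0 < a) :
    (∑ i ∈ range a, (X : ℂ[X]) ^ i) = ∏ ζ ∈ E a, (X - C ζ) := sigma_eq_prod a ha

lemma vE1 (a : ℕ) (ha : 0 < a) {z : ℂ} (hz : z ∈ E a) :
    (z - 1) * ∏ μ ∈ (E a).erase z, (z - μ) = a * z ^ (a - 1) := v1 a ha hz

lemma vE2 (a : ℕ) (ha : 0 < a) {z : ℂ} (hz : z ∈ E a) :
    z * ∏ μ ∈ (E a).erase z, (0 - μ) = -1 := v2 a ha hz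

lemma vE3 (n : ℕ) (hn : 0 < n) (z : ℂ) :
    (z - 1) * ∏ μ ∈ E n, (z - μ) = z ^ n - 1 := v3 n hn z

lemma vE4 (n : ℕ) (hn : 0 < n) : ∏ μ ∈ E n, (0 - μ) = 1 := v4 n hn

lemma pow_trunc (n : ℕ) :
    (X - C 1) ^ 3 ∣ (X : ℂ[X]) ^ n - (C 1 + C (n : ℂ) * (X - C 1) + C ((n.choose 2 : ℕ) : ℂ) * (X - C 1) ^ 2) := by
  induction n with
  | zero => simp
  | succ n ih =>
    have key : (X : ℂ[X]) * (C 1 + C (n : ℂ) * (X - C 1) + C ((n.choose 2 : ℕ) : ℂ) * (X - C 1) ^ 2)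
        - (C 1 + C ((n + 1 : ℕ) : ℂ) * (X - C 1) + C (((n + 1).choose 2 : ℕ) : ℂ) * (X - C 1) ^ 2)
        = C ((n.choose 2 : ℕ) : ℂ) * (X - C 1) ^ 3 := by
      have h1 : ((n + 1).choose 2 : ℕ) = n.choose 2 + n := by
        rw [Nat.choose_succ_succ]
        simp [Nat.choose_one_right, Nat.add_comm]
      rw [h1]
      push_cast
      simp only [map_add, map_one]
      ring
    have : (X : ℂ[X]) ^ (n + 1) - (C 1 + C ((n + 1 : ℕ) : ℂ) * (X - C 1) + C (((n + 1).choose 2 : ℕ) : ℂ) * (X - C 1) ^ 2)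
        = X * ((X : ℂ[X]) ^ n - (C 1 + C (n : ℂ) * (X - C 1) + C ((n.choose 2 : ℕ) : ℂ) * (X - C 1) ^ 2))
          + ((X : ℂ[X]) * (C 1 + C (n : ℂ) * (X - C 1) + C ((n.choose 2 : ℕ) : ℂ) * (X - C 1) ^ 2)
            - (C 1 + C ((n + 1 : ℕ) : ℂ) * (X - C 1) + C (((n + 1).choose 2 : ℕ) : ℂ) * (X - C 1) ^ 2)) := by
      ring
    rw [this, key]
    exact dvd_add (ih.mul_left X) (Dvd.intro_left _ rfl)

lemma geom_trunc (n : ℕ) :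
    (X - C 1) ^ 3 ∣ (∑ i ∈ range n, (X : ℂ[X]) ^ i)
      - (C (n : ℂ) + C ((n.choose 2 : ℕ) : ℂ) * (X - C 1) + C ((n.choose 3 : ℕ) : ℂ) * (X - C 1) ^ 2) := by
  induction n with
  | zero => simp
  | succ n ih =>
    have h2 : ((n + 1).choose 2 : ℕ) = n.choose 2 + n := by
      rw [Nat.choose_succ_succ]; simp [Nat.choose_one_right, Nat.add_comm]
    have h3 : ((n + 1).choose 3 : ℕ) = n.choose 3 + n.choose 2 := by
      rw [Nat.choose_succ_succ]; ring
    have split : (∑ i ∈ range (n + 1), (X : ℂ[X]) ^ i)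
        - (C ((n + 1 : ℕ) : ℂ) + C (((n + 1).choose 2 : ℕ) : ℂ) * (X - C 1) + C (((n + 1).choose 3 : ℕ) : ℂ) * (X - C 1) ^ 2)
        = ((∑ i ∈ range n, (X : ℂ[X]) ^ i)
            - (C (n : ℂ) + C ((n.choose 2 : ℕ) : ℂ) * (X - C 1) + C ((n.choose 3 : ℕ) : ℂ) * (X - C 1) ^ 2))
          + ((X : ℂ[X]) ^ n - (C 1 + C (n : ℂ) * (X - C 1) + C ((n.choose 2 : ℕ) : ℂ) * (X - C 1) ^ 2)) := by
      rw [Finset.sum_range_succ, h2, h3]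
      push_cast
      simp only [map_add, map_one]
      ring
    rw [split]
    exact dvd_add ih (pow_trunc n)

lemma trunc_mul3 {f f' g g' h h' d : ℂ[X]} (H1 : d ∣ f - f') (H2 : d ∣ g - g')
    (H3 : d ∣ h - h') : d ∣ f * g * h - f' * g' * h' := by
  have e : f * g * h - f' * g' * h'
      = (f - f') * g * h + f' * (g - g') * h + f' * g' * (h - h') := by ring
  rw [e]
  exact dvd_add (dvd_add ((H1.mul_right g).mul_right h)
    (((H2.mul_left f').mul_right h))) ((H3.mul_left (f' * g')))

lemma prod3 {R : Type*} [CommRing R] (t p1 q1 r1 p2 q2 r2 p3 q3 r3 : R) :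
    (p1 + q1 * t + r1 * t ^ 2) * (p2 + q2 * t + r2 * t ^ 2) * (p3 + q3 * t + r3 * t ^ 2)
      = p1 * p2 * p3
        + (q1 * p2 * p3 + p1 * q2 * p3 + p1 * p2 * q3) * t
        + (r1 * p2 * p3 + p1 * r2 * p3 + p1 * p2 * r3
            + q1 * q2 * p3 + q1 * p2 * q3 + p1 * q2 * q3) * t ^ 2
        + t ^ 3 * ((q1 * q2 * q3 + r1 * q2 * p3 + r1 * p2 * q3 + q1 * r2 * p3
              + p1 * r2 * q3 + q1 * p2 * r3 + p1 * q2 * r3)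
            + (r1 * r2 * p3 + r1 * p2 * r3 + p1 * r2 * r3
              + r1 * q2 * q3 + q1 * r2 * q3 + q1 * q2 * r3) * t
            + (r1 * r2 * q3 + r1 * q2 * r3 + q1 * r2 * r3) * t ^ 2
            + r1 * r2 * r3 * t ^ 3) := by
  ring

lemma inv3 {R : Type*} [CommRing R] (t p q r : R) :
    (p ^ 2 - p * q * t + (q ^ 2 - p * r) * t ^ 2) * (p + q * t + r * t ^ 2)
      = p ^ 3 + t ^ 3 * ((q ^ 3 - 2 * p * q * r) + (r * q ^ 2 - p * r ^ 2) * t) := by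
  ring

lemma cast_choose_two (n : ℕ) : ((n.choose 2 : ℕ) : ℂ) * 2 = n * (n - 1) := by
  induction n with
  | zero => simp
  | succ n ih =>
    have h : (n + 1).choose 2 = n.choose 2 + n := by
      rw [Nat.choose_succ_succ]; simp [Nat.choose_one_right, Nat.add_comm]
    rw [h]; push_cast; push_cast at ih; linear_combination ih

lemma cast_choose_three (n : ℕ) : ((n.choose 3 : ℕ) : ℂ) * 6 = n * (n - 1) * (n - 2) := by
  induction n with
  | zero => simp
  | succ n ih =>
    have h : (n + 1).choose 3 = n.choose 3 + n.choose 2 := by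
      rw [Nat.choose_succ_succ]; ring
    rw [h]; push_cast; push_cast at ih
    linear_combination ih + 3 * cast_choose_two n

lemma rhs_clear (a b c : ℕ) (ha : 0 < a) (hb : 0 < b) (hc : 0 < c) :
    12 * (a : ℂ) * b * c * (1 - (1 / 12) * (3 / a + 3 / b + 3 / c + (a : ℂ) / (b * c)
        + (b : ℂ) / (a * c) + (c : ℂ) / (a * b)))
      = 12 * (a : ℂ) * b * c
        - (3 * (a : ℂ) * b + 3 * (b : ℂ) * c + 3 * (c : ℂ) * a
          + (a : ℂ) ^ 2 + (b : ℂ) ^ 2 + (c : ℂ) ^ 2) := by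
  have haC : (a : ℂ) ≠ 0 := Nat.cast_ne_zero.mpr ha.ne'
  have hbC : (b : ℂ) ≠ 0 := Nat.cast_ne_zero.mpr hb.ne'
  have hcC : (c : ℂ) ≠ 0 := Nat.cast_ne_zero.mpr hc.ne'
  have e1 : 3 / (a : ℂ) * a = 3 := div_mul_cancel₀ 3 haC
  have e2 : 3 / (b : ℂ) * b = 3 := div_mul_cancel₀ 3 hbC
  have e3 : 3 / (c : ℂ) * c = 3 := div_mul_cancel₀ 3 hcC
  have e4 : (a : ℂ) / ((b : ℂ) * c) * ((b : ℂ) * c) = a :=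
    div_mul_cancel₀ _ (mul_ne_zero hbC hcC)
  have e5 : (b : ℂ) / ((a : ℂ) * c) * ((a : ℂ) * c) = b :=
    div_mul_cancel₀ _ (mul_ne_zero haC hcC)
  have e6 : (c : ℂ) / ((a : ℂ) * b) * ((a : ℂ) * b) = c :=
    div_mul_cancel₀ _ (mul_ne_zero haC hbC)
  linear_combination (-(b : ℂ) * c) * e1 + (-(a : ℂ) * c) * e2 + (-(a : ℂ) * b) * e3
    + (-(a : ℂ)) * e4 + (-(b : ℂ)) * e5 + (-(c : ℂ)) * e6

lemma P0_id (a b c : ℕ) :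
    12 * ((((a : ℂ) * b * c) ^ 2
        + ((a : ℂ) * b * c) * (((a.choose 2 : ℕ) : ℂ) * b * c + (a : ℂ) * ((b.choose 2 : ℕ) : ℂ) * c + (a : ℂ) * b * ((c.choose 2 : ℕ) : ℂ))
        + (((a.choose 2 : ℕ) : ℂ) * b * c + (a : ℂ) * ((b.choose 2 : ℕ) : ℂ) * c + (a : ℂ) * b * ((c.choose 2 : ℕ) : ℂ)) ^ 2
        - ((a : ℂ) * b * c) * (((a.choose 3 : ℕ) : ℂ) * b * c + (a : ℂ) * ((b.choose 3 : ℕ) : ℂ) * c + (a : ℂ) * b * ((c.choose 3 : ℕ) : ℂ)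
            + ((a.choose 2 : ℕ) : ℂ) * ((b.choose 2 : ℕ) : ℂ) * c + ((a.choose 2 : ℕ) : ℂ) * b * ((c.choose 2 : ℕ) : ℂ)
            + (a : ℂ) * ((b.choose 2 : ℕ) : ℂ) * ((c.choose 2 : ℕ) : ℂ))))
      = ((a : ℂ) * b * c) ^ 2 * (3 * (a : ℂ) * b + 3 * (b : ℂ) * c + 3 * (c : ℂ) * a
          + (a : ℂ) ^ 2 + (b : ℂ) ^ 2 + (c : ℂ) ^ 2) := by
  have e2a : ((a.choose 2 : ℕ) : ℂ) = a * (a - 1) / 2 := by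
    rw [eq_div_iff (two_ne_zero)]; exact cast_choose_two a
  have e2b : ((b.choose 2 : ℕ) : ℂ) = b * (b - 1) / 2 := by
    rw [eq_div_iff (two_ne_zero)]; exact cast_choose_two b
  have e2c : ((c.choose 2 : ℕ) : ℂ) = c * (c - 1) / 2 := by
    rw [eq_div_iff (two_ne_zero)]; exact cast_choose_two c
  have e3a : ((a.choose 3 : ℕ) : ℂ) = a * (a - 1) * (a - 2) / 6 := by
    rw [eq_div_iff (by norm_num : (6 : ℂ) ≠ 0)]; exact cast_choose_three a
  have e3b : ((b.choose 3 : ℕ) : ℂ) = b * (b - 1) * (b - 2) / 6 := by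
    rw [eq_div_iff (by norm_num : (6 : ℂ) ≠ 0)]; exact cast_choose_three b
  have e3c : ((c.choose 3 : ℕ) : ℂ) = c * (c - 1) * (c - 2) / 6 := by
    rw [eq_div_iff (by norm_num : (6 : ℂ) ≠ 0)]; exact cast_choose_three c
  rw [e2a, e2b, e2c, e3a, e3b, e3c]
  ring

lemma basis_eval (a b c : ℕ) (ha : 0 < a) (hb : 0 < b) (hc : 0 < c)
    (hab : Nat.Coprime a b) (hac : Nat.Coprime a c) (hbc : Nat.Coprime b c)
    {z : ℂ} (hz : z ∈ E a) :
    eval 0 (Lagrange.basis (E a ∪ (E b ∪ E c)) id z)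
      = -(z - 1) ^ 3 / ((a : ℂ) * (1 - z ^ b) * (1 - z ^ c)) := by
  obtain ⟨hz1, hzmem⟩ := Finset.mem_erase.mp hz
  have hza : z ^ a = 1 := (mem_nthRootsFinset ha 1).mp hzmem
  have hz0 : z ≠ 0 := by
    intro h; rw [h, zero_pow ha.ne'] at hza; exact zero_ne_one hza
  have hzb : z ^ b ≠ 1 := fun h => hz1 (eq_one_of_pows hab hza h)
  have hzc : z ^ c ≠ 1 := fun h => hz1 (eq_one_of_pows hac hza h)
  have hzB : z ∉ E b := not_mem_E hab ha hb hz
  have hzC : z ∉ E c := not_mem_E hac ha hc hz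
  -- the erased union
  have hset : (E a ∪ (E b ∪ E c)).erase z = (E a).erase z ∪ (E b ∪ E c) := by
    rw [Finset.erase_union_distrib, Finset.erase_union_distrib,
      Finset.erase_eq_of_notMem hzB, Finset.erase_eq_of_notMem hzC]
  have hd1 : Disjoint ((E a).erase z) (E b ∪ E c) := by
    refine Finset.disjoint_of_subset_left (Finset.erase_subset _ _) ?_
    rw [Finset.disjoint_union_right]
    exact ⟨disjoint_E hab ha hb, disjoint_E hac ha hc⟩
  have hd2 : Disjoint (E b) (E c) := disjoint_E hbc hb hc
  rw [Lagrange.basis, hset, Finset.prod_union hd1, Finset.prod_union hd2]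
  simp only [eval_mul, eval_prod, Lagrange.basisDivisor, eval_C, eval_sub, eval_X, id]
  rw [Finset.prod_mul_distrib, Finset.prod_mul_distrib, Finset.prod_mul_distrib,
    Finset.prod_inv_distrib, Finset.prod_inv_distrib, Finset.prod_inv_distrib]
  -- name products
  set pa := ∏ μ ∈ (E a).erase z, (z - μ) with hpa
  set qa := ∏ μ ∈ (E a).erase z, (0 - μ) with hqa
  set pb := ∏ μ ∈ E b, (z - μ) with hpb
  set qb := ∏ μ ∈ E b, (0 - μ) with hqb
  set pc := ∏ μ ∈ E c, (z - μ) with hpc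
  set qc := ∏ μ ∈ E c, (0 - μ) with hqc
  have f1 := vE1 a ha hz
  have f2 := vE2 a ha hz
  have f3 := vE3 b hb z
  have f4 := vE4 b hb
  have f5 := vE3 c hc z
  have f6 := vE4 c hc
  rw [← hpa] at f1; rw [← hqa] at f2; rw [← hpb] at f3; rw [← hqb] at f4
  rw [← hpc] at f5; rw [← hqc] at f6
  have hz1' : z - 1 ≠ 0 := sub_ne_zero.mpr hz1
  have haC : (a : ℂ) ≠ 0 := Nat.cast_ne_zero.mpr ha.ne'
  have hw : z * z ^ (a - 1) = 1 := by
    rw [← pow_succ']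
    have : a - 1 + 1 = a := by omega
    rw [this, hza]
  have hw0 : z ^ (a - 1) ≠ 0 := pow_ne_zero _ hz0
  have hpb0 : z ^ b - 1 ≠ 0 := sub_ne_zero.mpr hzb
  have hpc0 : z ^ c - 1 ≠ 0 := sub_ne_zero.mpr hzc
  have pa0 : pa ≠ 0 := by
    intro h; rw [h, mul_zero] at f1
    exact (mul_ne_zero haC hw0) f1.symm
  have pb0 : pb ≠ 0 := by
    intro h; rw [h, mul_zero] at f3; exact hpb0 f3.symm
  have pc0 : pc ≠ 0 := by
    intro h; rw [h, mul_zero] at f5; exact hpc0 f5.symm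
  have epa : pa = (a : ℂ) * z ^ (a - 1) / (z - 1) := by
    rw [eq_div_iff hz1']; linear_combination f1
  have eqa : qa = -1 / z := by
    rw [eq_div_iff hz0]; linear_combination f2
  have epb : pb = (z ^ b - 1) / (z - 1) := by
    rw [eq_div_iff hz1']; linear_combination f3
  have epc : pc = (z ^ c - 1) / (z - 1) := by
    rw [eq_div_iff hz1']; linear_combination f5
  have hw' : z ^ (a - 1) = 1 / z := by
    rw [eq_div_iff hz0]; linear_combination hw
  rw [hw'] at epa
  have h1b : (1 : ℂ) - z ^ b ≠ 0 := sub_ne_zero.mpr (Ne.symm hzb)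
  have h1c : (1 : ℂ) - z ^ c ≠ 0 := sub_ne_zero.mpr (Ne.symm hzc)
  rw [epa, eqa, epb, epc, f4, f6]
  field_simp
  ring













lemma prod3_dvd {R : Type*} [CommRing R] (t p1 q1 r1 p2 q2 r2 p3 q3 r3 : R) :
    t ^ 3 ∣ (p1 + q1 * t + r1 * t ^ 2) * (p2 + q2 * t + r2 * t ^ 2) * (p3 + q3 * t + r3 * t ^ 2)
      - (p1 * p2 * p3
        + (q1 * p2 * p3 + p1 * q2 * p3 + p1 * p2 * q3) * t
        + (r1 * p2 * p3 + p1 * r2 * p3 + p1 * p2 * r3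
            + q1 * q2 * p3 + q1 * p2 * q3 + p1 * q2 * q3) * t ^ 2) :=
  ⟨(q1 * q2 * q3 + r1 * q2 * p3 + r1 * p2 * q3 + q1 * r2 * p3
      + p1 * r2 * q3 + q1 * p2 * r3 + p1 * q2 * r3)
    + (r1 * r2 * p3 + r1 * p2 * r3 + p1 * r2 * r3
      + r1 * q2 * q3 + q1 * r2 * q3 + q1 * q2 * r3) * t
    + (r1 * r2 * q3 + r1 * q2 * r3 + q1 * r2 * r3) * t ^ 2
    + r1 * r2 * r3 * t ^ 3, by ring⟩

lemma inv3_dvd {R : Type*} [CommRing R] (t p q r : R) :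
    t ^ 3 ∣ (p + q * t + r * t ^ 2) * (p ^ 2 - p * q * t + (q ^ 2 - p * r) * t ^ 2) - p ^ 3 :=
  ⟨(q ^ 3 - 2 * p * q * r) + (r * q ^ 2 - p * r ^ 2) * t, by ring⟩

lemma main (a b c : ℕ) (ha : 0 < a) (hb : 0 < b) (hc : 0 < c)
    (hab : Nat.Coprime a b) (hac : Nat.Coprime a c) (hbc : Nat.Coprime b c) :
    fourierDedekind2zero b c a + fourierDedekind2zero a c b + fourierDedekind2zero a b c
      = 1 - (1 / 12) * (3 / a + 3 / b + 3 / c + (a : ℂ) / (b * c)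
          + (b : ℂ) / (a * c) + (c : ℂ) / (a * b)) := by
  classical
  have haC : (a : ℂ) ≠ 0 := Nat.cast_ne_zero.mpr ha.ne'
  have hbC : (b : ℂ) ≠ 0 := Nat.cast_ne_zero.mpr hb.ne'
  have hcC : (c : ℂ) ≠ 0 := Nat.cast_ne_zero.mpr hc.ne'
  set g0 : ℂ := (a : ℂ) * b * c with hg0
  set g1 : ℂ := ((a.choose 2 : ℕ) : ℂ) * b * c + (a : ℂ) * ((b.choose 2 : ℕ) : ℂ) * c
      + (a : ℂ) * b * ((c.choose 2 : ℕ) : ℂ) with hg1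
  set g2 : ℂ := ((a.choose 3 : ℕ) : ℂ) * b * c + (a : ℂ) * ((b.choose 3 : ℕ) : ℂ) * c
      + (a : ℂ) * b * ((c.choose 3 : ℕ) : ℂ)
      + ((a.choose 2 : ℕ) : ℂ) * ((b.choose 2 : ℕ) : ℂ) * c
      + ((a.choose 2 : ℕ) : ℂ) * b * ((c.choose 2 : ℕ) : ℂ)
      + (a : ℂ) * ((b.choose 2 : ℕ) : ℂ) * ((c.choose 2 : ℕ) : ℂ) with hg2
  set T : ℂ[X] := X - C 1 with hT
  set P : ℂ[X] := C (g0 ^ 2) - C (g0 * g1) * T + C (g1 ^ 2 - g0 * g2) * T ^ 2 with hP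
  set G : ℂ[X] := (∑ i ∈ range a, (X : ℂ[X]) ^ i) * (∑ i ∈ range b, (X : ℂ[X]) ^ i)
      * (∑ i ∈ range c, (X : ℂ[X]) ^ i) with hGdef
  -- truncation of G mod T^3
  have hgt : T ^ 3 ∣ G - (C g0 + C g1 * T + C g2 * T ^ 2) := by
    have h1 : T ^ 3 ∣ G
        - ((C (a : ℂ) + C ((a.choose 2 : ℕ) : ℂ) * T + C ((a.choose 3 : ℕ) : ℂ) * T ^ 2)
          * (C (b : ℂ) + C ((b.choose 2 : ℕ) : ℂ) * T + C ((b.choose 3 : ℕ) : ℂ) * T ^ 2)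
          * (C (c : ℂ) + C ((c.choose 2 : ℕ) : ℂ) * T + C ((c.choose 3 : ℕ) : ℂ) * T ^ 2)) :=
      trunc_mul3 (geom_trunc a) (geom_trunc b) (geom_trunc c)
    have h2 : T ^ 3 ∣ ((C (a : ℂ) + C ((a.choose 2 : ℕ) : ℂ) * T + C ((a.choose 3 : ℕ) : ℂ) * T ^ 2)
          * (C (b : ℂ) + C ((b.choose 2 : ℕ) : ℂ) * T + C ((b.choose 3 : ℕ) : ℂ) * T ^ 2)
          * (C (c : ℂ) + C ((c.choose 2 : ℕ) : ℂ) * T + C ((c.choose 3 : ℕ) : ℂ) * T ^ 2))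
        - (C g0 + C g1 * T + C g2 * T ^ 2) := by
      have h3 := prod3_dvd T (C (a : ℂ)) (C ((a.choose 2 : ℕ) : ℂ)) (C ((a.choose 3 : ℕ) : ℂ))
        (C (b : ℂ)) (C ((b.choose 2 : ℕ) : ℂ)) (C ((b.choose 3 : ℕ) : ℂ))
        (C (c : ℂ)) (C ((c.choose 2 : ℕ) : ℂ)) (C ((c.choose 3 : ℕ) : ℂ))
      have e : (C g0 + C g1 * T + C g2 * T ^ 2 : ℂ[X])
          = C (a : ℂ) * C (b : ℂ) * C (c : ℂ)
            + (C ((a.choose 2 : ℕ) : ℂ) * C (b : ℂ) * C (c : ℂ)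
              + C (a : ℂ) * C ((b.choose 2 : ℕ) : ℂ) * C (c : ℂ)
              + C (a : ℂ) * C (b : ℂ) * C ((c.choose 2 : ℕ) : ℂ)) * T
            + (C ((a.choose 3 : ℕ) : ℂ) * C (b : ℂ) * C (c : ℂ)
              + C (a : ℂ) * C ((b.choose 3 : ℕ) : ℂ) * C (c : ℂ)
              + C (a : ℂ) * C (b : ℂ) * C ((c.choose 3 : ℕ) : ℂ)
              + C ((a.choose 2 : ℕ) : ℂ) * C ((b.choose 2 : ℕ) : ℂ) * C (c : ℂ)
              + C ((a.choose 2 : ℕ) : ℂ) * C (b : ℂ) * C ((c.choose 2 : ℕ) : ℂ)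
              + C (a : ℂ) * C ((b.choose 2 : ℕ) : ℂ) * C ((c.choose 2 : ℕ) : ℂ)) * T ^ 2 := by
        rw [hg0, hg1, hg2]
        simp only [map_add, map_mul]
      rw [e]
      exact h3
    have h4 := dvd_add h1 h2
    rwa [sub_add_sub_cancel] at h4
  -- inverse of G mod T^3
  have hPdvd : T ^ 3 ∣ C (g0 ^ 3) - P * G := by
    have h4 : T ^ 3 ∣ (C g0 + C g1 * T + C g2 * T ^ 2) * P - C (g0 ^ 3) := by
      have h5 := inv3_dvd T (C g0) (C g1) (C g2)
      have e : (C g0 + C g1 * T + C g2 * T ^ 2) * P - C (g0 ^ 3)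
          = (C g0 + C g1 * T + C g2 * T ^ 2)
            * ((C g0) ^ 2 - C g0 * C g1 * T + ((C g1) ^ 2 - C g0 * C g2) * T ^ 2)
            - (C g0) ^ 3 := by
        rw [hP]
        simp only [map_add, map_mul, map_sub, map_pow]
      rw [e]
      exact h5
    have e2 : C (g0 ^ 3) - P * G
        = -((C g0 + C g1 * T + C g2 * T ^ 2) * P - C (g0 ^ 3))
          + -(P * (G - (C g0 + C g1 * T + C g2 * T ^ 2))) := by ring
    rw [e2]
    exact dvd_add (dvd_neg.mpr h4) (dvd_neg.mpr (hgt.mul_left P))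
  obtain ⟨K, hK⟩ := hPdvd
  -- the node set
  set S : Finset ℂ := E a ∪ (E b ∪ E c) with hS
  have hdisjA : Disjoint (E a) (E b ∪ E c) := by
    rw [Finset.disjoint_union_right]
    exact ⟨disjoint_E hab ha hb, disjoint_E hac ha hc⟩
  have hdisjBC : Disjoint (E b) (E c) := disjoint_E hbc hb hc
  have hGnodal : G = ∏ z ∈ S, (X - C z) := by
    rw [hGdef, hS, Finset.prod_union hdisjA, Finset.prod_union hdisjBC,
      sigma_eq_prodE a ha, sigma_eq_prodE b hb, sigma_eq_prodE c hc]
    ring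
  have hGnod : G = Lagrange.nodal S id := by
    rw [hGnodal, Lagrange.nodal_eq]
    simp only [id_eq]
  have hdegG : G.degree = (#S : WithBot ℕ) := by rw [hGnod, Lagrange.degree_nodal]
  -- degree bound for K
  have hKdeg : K.degree < (#S : WithBot ℕ) := by
    by_cases hK0 : K = 0
    · rw [hK0, degree_zero]
      exact WithBot.bot_lt_coe _
    · have hTdeg : (T ^ 3 : ℂ[X]).degree = (3 : WithBot ℕ) := by
        rw [hT, degree_pow, degree_X_sub_C]
        rfl
      have hPdeg : P.degree ≤ (2 : WithBot ℕ) := by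
        rw [hP]
        refine le_trans (degree_add_le _ _) (max_le (le_trans (degree_sub_le _ _) (max_le ?_ ?_)) ?_)
        · exact le_trans degree_C_le (by norm_num)
        · refine le_trans (degree_mul_le _ _) ?_
          rw [hT, degree_X_sub_C]
          calc (C (g0 * g1)).degree + 1 ≤ 0 + 1 := add_le_add_left degree_C_le 1
            _ ≤ 2 := by norm_num
        · refine le_trans (degree_mul_le _ _) ?_
          have : (T ^ 2 : ℂ[X]).degree = (2 : WithBot ℕ) := by
            rw [hT, degree_pow, degree_X_sub_C]; rfl
          rw [this]
          calc (C (g1 ^ 2 - g0 * g2)).degree + 2 ≤ 0 + 2 := add_le_add_left degree_C_le 2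
            _ = 2 := by norm_num
      have h6 : (C (g0 ^ 3) - P * G).degree ≤ ((#S + 2 : ℕ) : WithBot ℕ) := by
        refine le_trans (degree_sub_le _ _) (max_le ?_ ?_)
        · exact le_trans degree_C_le (by exact_mod_cast Nat.zero_le _)
        · refine le_trans (degree_mul_le _ _) ?_
          rw [hdegG]
          calc P.degree + (#S : WithBot ℕ) ≤ 2 + (#S : WithBot ℕ) :=
                add_le_add_left hPdeg _
            _ = ((#S + 2 : ℕ) : WithBot ℕ) := by
                push_cast
                rw [add_comm]
      rw [hK, degree_mul, hTdeg, degree_eq_natDegree hK0] at h6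
      have h7 : 3 + K.natDegree ≤ #S + 2 := by exact_mod_cast h6
      rw [degree_eq_natDegree hK0]
      exact_mod_cast by omega
  -- Lagrange interpolation of K
  have hinj : Set.InjOn id (S : Set ℂ) := Set.injOn_id _
  have hKi := Lagrange.eq_interpolate hinj hKdeg
  have hKeval : eval 0 K = ∑ z ∈ S, eval z K * eval 0 (Lagrange.basis S id z) := by
    conv_lhs => rw [hKi]
    rw [Lagrange.interpolate_apply, eval_finset_sum]
    exact Finset.sum_congr rfl fun z hz => by rw [eval_mul, eval_C, id_eq]
  -- K at the nodes
  have hroot : ∀ z ∈ S, eval z G = 0 := by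
    intro z hz
    rw [hGnodal, eval_prod]
    exact Finset.prod_eq_zero hz (by rw [eval_sub, eval_X, eval_C, sub_self])
  have hKz : ∀ z ∈ S, (z - 1) ^ 3 * eval z K = g0 ^ 3 := by
    intro z hz
    have h8 := congrArg (eval z) hK
    rw [hT] at h8
    simp only [eval_sub, eval_mul, eval_pow, eval_C, eval_X] at h8
    rw [hroot z hz, mul_zero, sub_zero] at h8
    exact h8.symm
  -- slot computations
  have hsumA : ∑ z ∈ E a, eval z K * eval 0 (Lagrange.basis (E a ∪ (E b ∪ E c)) id z)
      = -g0 ^ 3 * fourierDedekind2zero b c a := by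
    have hterm : ∀ z ∈ E a, eval z K * eval 0 (Lagrange.basis (E a ∪ (E b ∪ E c)) id z)
        = -g0 ^ 3 * (1 / ((1 - z ^ b) * (1 - z ^ c))) / a := by
      intro z hz
      obtain ⟨hz1, hzmem⟩ := Finset.mem_erase.mp hz
      have hza : z ^ a = 1 := (mem_nthRootsFinset ha 1).mp hzmem
      have hz1' : z - 1 ≠ 0 := sub_ne_zero.mpr hz1
      have hzb : (1 : ℂ) - z ^ b ≠ 0 :=
        sub_ne_zero.mpr fun h => hz1 (eq_one_of_pows hab hza h.symm)
      have hzc : (1 : ℂ) - z ^ c ≠ 0 :=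
        sub_ne_zero.mpr fun h => hz1 (eq_one_of_pows hac hza h.symm)
      have hKz' := hKz z (by rw [hS]; exact Finset.mem_union_left _ hz)
      rw [basis_eval a b c ha hb hc hab hac hbc hz]
      field_simp
      linear_combination -hKz'
    rw [Finset.sum_congr rfl hterm, ← Finset.sum_div, ← Finset.mul_sum]
    rw [fourierDedekind2zero]
    ring
  have hUB : E b ∪ (E a ∪ E c) = E a ∪ (E b ∪ E c) := Finset.union_left_comm _ _ _
  have hsumB : ∑ z ∈ E b, eval z K * eval 0 (Lagrange.basis (E a ∪ (E b ∪ E c)) id z)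
      = -g0 ^ 3 * fourierDedekind2zero a c b := by
    have hterm : ∀ z ∈ E b, eval z K * eval 0 (Lagrange.basis (E a ∪ (E b ∪ E c)) id z)
        = -g0 ^ 3 * (1 / ((1 - z ^ a) * (1 - z ^ c))) / b := by
      intro z hz
      obtain ⟨hz1, hzmem⟩ := Finset.mem_erase.mp hz
      have hzb' : z ^ b = 1 := (mem_nthRootsFinset hb 1).mp hzmem
      have hz1' : z - 1 ≠ 0 := sub_ne_zero.mpr hz1
      have hza : (1 : ℂ) - z ^ a ≠ 0 :=
        sub_ne_zero.mpr fun h => hz1 (eq_one_of_pows hab.symm hzb' h.symm)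
      have hzc : (1 : ℂ) - z ^ c ≠ 0 :=
        sub_ne_zero.mpr fun h => hz1 (eq_one_of_pows hbc hzb' h.symm)
      have hKz' := hKz z (by
        rw [hS]; exact Finset.mem_union_right _ (Finset.mem_union_left _ hz))
      rw [← hUB, basis_eval b a c hb ha hc hab.symm hbc hac hz]
      rw [← hKz', mul_assoc (b : ℂ), ← div_div (-(z - 1) ^ 3)]
      ring
    rw [Finset.sum_congr rfl hterm, ← Finset.sum_div, ← Finset.mul_sum]
    rw [fourierDedekind2zero]
    ring
  have hUC : E c ∪ (E a ∪ E b) = E a ∪ (E b ∪ E c) := by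
    rw [Finset.union_left_comm, Finset.union_comm (E c) (E b)]
  have hsumC : ∑ z ∈ E c, eval z K * eval 0 (Lagrange.basis (E a ∪ (E b ∪ E c)) id z)
      = -g0 ^ 3 * fourierDedekind2zero a b c := by
    have hterm : ∀ z ∈ E c, eval z K * eval 0 (Lagrange.basis (E a ∪ (E b ∪ E c)) id z)
        = -g0 ^ 3 * (1 / ((1 - z ^ a) * (1 - z ^ b))) / c := by
      intro z hz
      obtain ⟨hz1, hzmem⟩ := Finset.mem_erase.mp hz
      have hzc' : z ^ c = 1 := (mem_nthRootsFinset hc 1).mp hzmem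
      have hz1' : z - 1 ≠ 0 := sub_ne_zero.mpr hz1
      have hza : (1 : ℂ) - z ^ a ≠ 0 :=
        sub_ne_zero.mpr fun h => hz1 (eq_one_of_pows hac.symm hzc' h.symm)
      have hzb : (1 : ℂ) - z ^ b ≠ 0 :=
        sub_ne_zero.mpr fun h => hz1 (eq_one_of_pows hbc.symm hzc' h.symm)
      have hKz' := hKz z (by
        rw [hS]; exact Finset.mem_union_right _ (Finset.mem_union_right _ hz))
      rw [← hUC, basis_eval c a b hc ha hb hac.symm hbc.symm hab hz]
      rw [← hKz', mul_assoc (c : ℂ), ← div_div (-(z - 1) ^ 3)]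
      ring
    rw [Finset.sum_congr rfl hterm, ← Finset.sum_div, ← Finset.mul_sum]
    rw [fourierDedekind2zero]
    ring
  -- evaluate everything at 0
  have hG0 : eval 0 G = 1 := by
    rw [hGdef]
    simp only [eval_mul, eval_finset_sum, eval_pow, eval_X]
    rw [geom_sum_zero_eval a ha, geom_sum_zero_eval b hb, geom_sum_zero_eval c hc]
    norm_num
  have h9 := congrArg (eval 0) hK
  rw [hP, hT] at h9
  simp only [eval_sub, eval_add, eval_mul, eval_pow, eval_C, eval_X] at h9
  rw [hG0] at h9
  -- h9 : g0^3 - (...) * 1 = (0-1)^3 * eval 0 K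
  rw [hS] at hKeval
  rw [Finset.sum_union hdisjA, Finset.sum_union hdisjBC, hsumA, hsumB, hsumC] at hKeval
  -- combine
  have hfd : g0 ^ 3 * (fourierDedekind2zero b c a + fourierDedekind2zero a c b
        + fourierDedekind2zero a b c)
      = g0 ^ 3 - (g0 ^ 2 + g0 * g1 + g1 ^ 2 - g0 * g2) := by
    rw [hKeval] at h9
    linear_combination -h9
  have hg0ne : g0 ≠ 0 := by
    rw [hg0]; exact mul_ne_zero (mul_ne_zero haC hbC) hcC
  apply mul_left_cancel₀ (show (12 : ℂ) * g0 ^ 3 ≠ 0 from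
    mul_ne_zero (by norm_num) (pow_ne_zero 3 hg0ne))
  have hrc := rhs_clear a b c ha hb hc
  have hpid := P0_id a b c
  rw [hg0, hg1, hg2] at hfd
  rw [hg0]
  linear_combination 12 * hfd - ((a : ℂ) * b * c) ^ 2 * hrc - hpid


end ZagierAux

theorem zagier_reciprocity_fourier_form (a₀ a₁ a₂ : ℕ) (h₀ : 0 < a₀)
    (h₁ : 0 < a₁) (h₂ : 0 < a₂) (h₀₁ : Nat.Coprime a₀ a₁)
    (h₀₂ : Nat.Coprime a₀ a₂) (h₁₂ : Nat.Coprime a₁ a₂) :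
    fourierDedekind2zero a₁ a₂ a₀ + fourierDedekind2zero a₀ a₂ a₁ +
        fourierDedekind2zero a₀ a₁ a₂ =
      1 - (1 / 12) * (3 / a₀ + 3 / a₁ + 3 / a₂ + (a₀ : ℂ) / (a₁ * a₂) +
        (a₁ : ℂ) / (a₀ * a₂) + (a₂ : ℂ) / (a₀ * a₁)) :=
  ZagierAux.main a₀ a₁ a₂ h₀ h₁ h₂ h₀₁ h₀₂ h₁₂
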